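/- Let λ be a partition of n having two parts a and b with a ≥ b > 0 (occurring as distinct parts, possibly of equal value), and let μ be the partition of n obtained from λ by replacing these two parts with a+1 and b−1 (deleting b−1 if it equals 0) and reordering into nonincreasing form. Then h(μ) < h(λ), where h denotes the height function. -/

import Mathlib

/-- The parts of a partition listed in nonincreasing order. -/
def sortedParts {n : ℕ} (p : Nat.Partition n) : List ℕ :=
  (p.parts.sort (· ≤ ·)).reverse

/-- The height `h(λ) = Σ i·λ_i`, where `λ_1 ≥ λ_2 ≥ …` are the parts in
nonincreasing order. -/
def height {n : ℕ} (p : Nat.Partition n) : ℕ :=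
  ((sortedParts p).zipIdx.map (fun x => (x.2 + 1) * x.1)).sum

lemma enumFrom_sum_succ (L : List ℕ) (k : ℕ) :
    ((L.zipIdx (k+1)).map (fun x => (x.2+1)*x.1)).sum
      = ((L.zipIdx k).map (fun x => (x.2+1)*x.1)).sum + L.sum := by
  induction L generalizing k with
  | nil => simp
  | cons x L ih => simp [List.zipIdx_cons, ih (k+1)]; ring

lemma indicator_sum (x e : ℕ) (he : e ≤ x) :
    (∑ j ∈ Finset.Icc 1 x, if j ≤ e then 1 else 0) = e := by
  rw [← Finset.sum_filter]
  have : (Finset.Icc 1 x).filter (fun j => j ≤ e) = Finset.Icc 1 e := by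
    ext j; simp; omega
  rw [this]; simp

lemma sum_countP (x : ℕ) (L : List ℕ) (hL : ∀ e ∈ L, e ≤ x) :
    (∑ j ∈ Finset.Icc 1 x, L.countP (fun e => j ≤ e)) = L.sum := by
  induction L with
  | nil => simp
  | cons e L ih =>
    simp only [List.countP_cons, decide_eq_true_eq]
    rw [Finset.sum_add_distrib, ih (fun e he => hL e (List.mem_cons_of_mem _ he)),
      indicator_sum x e (hL e List.mem_cons_self), List.sum_cons, Nat.add_comm]

lemma list_key (L : List ℕ) (hs : L.Pairwise (· ≥ ·)) (N : ℕ) (hN : ∀ e ∈ L, e ≤ N) :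
    2 * ((L.zipIdx.map (fun x => (x.2 + 1) * x.1)).sum)
      = ∑ j ∈ Finset.Icc 1 N, (L.countP (fun e => j ≤ e)) * (L.countP (fun e => j ≤ e) + 1) := by
  induction L with
  | nil => simp
  | cons x L ih =>
    have hxN : x ≤ N := hN x List.mem_cons_self
    have hsL : L.Pairwise (· ≥ ·) := hs.of_cons
    have hxL : ∀ e ∈ L, e ≤ x := fun e he => List.rel_of_pairwise_cons hs he
    have hLN : ∀ e ∈ L, e ≤ N := fun e he => hN e (List.mem_cons_of_mem _ he)
    have hlhs : ((x :: L).zipIdx.map (fun x => (x.2 + 1) * x.1)).sum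
        = x + ((L.zipIdx.map (fun x => (x.2 + 1) * x.1)).sum + L.sum) := by
      rw [List.zipIdx_cons]
      simp only [List.map_cons, List.sum_cons]
      rw [enumFrom_sum_succ]
      simp
    rw [hlhs]
    have hterm : ∀ j ∈ Finset.Icc 1 N,
        ((x :: L).countP (fun e => j ≤ e)) * ((x :: L).countP (fun e => j ≤ e) + 1)
          = (L.countP (fun e => j ≤ e)) * (L.countP (fun e => j ≤ e) + 1)
            + (if j ≤ x then 2 * (L.countP (fun e => j ≤ e) + 1) else 0) := by
      intro j _
      rw [List.countP_cons]
      by_cases h : j ≤ x <;> simp [h] <;> try ring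
    rw [Finset.sum_congr rfl hterm, Finset.sum_add_distrib, ← ih hsL hLN,
      ← Finset.sum_filter]
    have hfil : (Finset.Icc 1 N).filter (fun j => j ≤ x) = Finset.Icc 1 x := by
      ext j; simp; omega
    rw [hfil]
    have hlast : (∑ j ∈ Finset.Icc 1 x, 2 * (L.countP (fun e => j ≤ e) + 1))
        = 2 * L.sum + 2 * x := by
      simp only [Nat.mul_add, Finset.sum_add_distrib, ← Finset.mul_sum,
        sum_countP x L hxL, Finset.sum_const, Nat.card_Icc, smul_eq_mul]
      omega
    rw [hlast]; ring

lemma coe_sortedParts {n : ℕ} (p : Nat.Partition n) : (↑(sortedParts p) : Multiset ℕ) = p.parts := by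
  rw [sortedParts, ← Multiset.coe_reverse, List.reverse_reverse, Multiset.sort_eq]

lemma sorted_sortedParts {n : ℕ} (p : Nat.Partition n) : (sortedParts p).Pairwise (· ≥ ·) :=
  List.pairwise_reverse.mpr (Multiset.pairwise_sort (s := p.parts) (r := (· ≤ ·)))

lemma key {n : ℕ} (p : Nat.Partition n) (N : ℕ) (hN : ∀ e ∈ p.parts, e ≤ N) :
    2 * height p = ∑ j ∈ Finset.Icc 1 N,
      (Multiset.countP (fun e => j ≤ e) p.parts) * (Multiset.countP (fun e => j ≤ e) p.parts + 1) := by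
  have h1 : ∀ j : ℕ, Multiset.countP (fun e => j ≤ e) p.parts
      = (sortedParts p).countP (fun e => j ≤ e) := by
    intro j; rw [← coe_sortedParts p, Multiset.coe_countP]
  simp only [h1]
  refine list_key _ (sorted_sortedParts p) N (fun e he => hN e ?_)
  rw [← coe_sortedParts p]
  exact Multiset.mem_coe.mpr he

lemma countP_ge_mono (s : Multiset ℕ) {a b : ℕ} (h : b ≤ a) :
    Multiset.countP (fun e => a ≤ e) s ≤ Multiset.countP (fun e => b ≤ e) s := by
  induction s using Multiset.induction with
  | empty => simp
  | cons x t ih =>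
    rw [Multiset.countP_cons, Multiset.countP_cons]
    split_ifs <;> omega

/-- Transferring a unit from a part `b` to a part `a` with `a ≥ b > 0`
(occurring as distinct parts), deleting `b - 1` if it becomes `0`, strictly
decreases the height. -/
theorem height_lt_of_transfer {n : ℕ} (l m : Nat.Partition n) (a b : ℕ)
    (rest : Multiset ℕ) (hb : 0 < b) (hab : b ≤ a)
    (hl : l.parts = a ::ₘ b ::ₘ rest)
    (hm : m.parts = (a + 1) ::ₘ (if b = 1 then rest else (b - 1) ::ₘ rest)) :
    height m < height l := by
  have hsum : a + b + rest.sum = n := by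
    have := l.parts_sum; rw [hl] at this; simp at this; omega
  have hlN : ∀ e ∈ l.parts, e ≤ n := by
    intro e he
    have := Multiset.le_sum_of_mem he
    rwa [l.parts_sum] at this
  have hmN : ∀ e ∈ m.parts, e ≤ n := by
    intro e he
    have := Multiset.le_sum_of_mem he
    rwa [m.parts_sum] at this
  set r : ℕ → ℕ := fun j => Multiset.countP (fun e => j ≤ e) rest with hr
  have hcl : ∀ j : ℕ, Multiset.countP (fun e => j ≤ e) l.parts
      = r j + (if j ≤ b then 1 else 0) + (if j ≤ a then 1 else 0) := by
    intro j; rw [hl, Multiset.countP_cons, Multiset.countP_cons]; try ring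
  have hcm : ∀ j : ℕ, 1 ≤ j → Multiset.countP (fun e => j ≤ e) m.parts
      = r j + (if j ≤ b - 1 then 1 else 0) + (if j ≤ a + 1 then 1 else 0) := by
    intro j hj
    rw [hm]
    by_cases h1 : b = 1
    · subst h1
      rw [if_pos rfl, Multiset.countP_cons]
      have h2 : ¬ (j ≤ 1 - 1) := by omega
      rw [if_neg h2]
      try ring
    · rw [if_neg h1, Multiset.countP_cons, Multiset.countP_cons]; try ring
  have hkeyl := key l n hlN
  have hkeym := key m n hmN
  have hterm : ∀ j ∈ Finset.Icc 1 n,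
      (Multiset.countP (fun e => j ≤ e) m.parts) * (Multiset.countP (fun e => j ≤ e) m.parts + 1)
        + (if j = b then 2 * (r b + 2) else 0)
      = (Multiset.countP (fun e => j ≤ e) l.parts) * (Multiset.countP (fun e => j ≤ e) l.parts + 1)
        + (if j = a + 1 then 2 * (r (a+1) + 1) else 0) := by
    intro j hj
    simp only [Finset.mem_Icc] at hj
    rw [hcl j, hcm j hj.1]
    by_cases hjb : j = b
    · rw [hjb]
      have h1 : ¬ (b ≤ b - 1) := by omega
      have h4 : ¬ (b = a + 1) := by omega
      rw [if_pos rfl, if_pos (le_refl b), if_neg h1, if_pos hab,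
        if_pos (by omega : b ≤ a + 1), if_neg h4]
      ring
    · by_cases hja : j = a + 1
      · rw [hja]
        have h1 : ¬ (a + 1 ≤ b - 1) := by omega
        have h2 : ¬ (a + 1 ≤ a) := by omega
        have h3 : ¬ (a + 1 ≤ b) := by omega
        have h5 : ¬ (a + 1 = b) := by omega
        rw [if_neg h5, if_pos rfl, if_neg h1, if_neg h2, if_neg h3, if_pos (le_refl _)]
        ring
      · rw [if_neg hjb, if_neg hja]
        have heq : r j + (if j ≤ b - 1 then 1 else 0) + (if j ≤ a + 1 then 1 else 0)
            = r j + (if j ≤ b then 1 else 0) + (if j ≤ a then 1 else 0) := by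
          have h1 := hj.1
          split_ifs <;> omega
        rw [heq]
  have hsums : (∑ j ∈ Finset.Icc 1 n,
      ((Multiset.countP (fun e => j ≤ e) m.parts) * (Multiset.countP (fun e => j ≤ e) m.parts + 1)
        + (if j = b then 2 * (r b + 2) else 0)))
      = ∑ j ∈ Finset.Icc 1 n,
      ((Multiset.countP (fun e => j ≤ e) l.parts) * (Multiset.countP (fun e => j ≤ e) l.parts + 1)
        + (if j = a + 1 then 2 * (r (a+1) + 1) else 0)) := Finset.sum_congr rfl hterm
  rw [Finset.sum_add_distrib, Finset.sum_add_distrib, ← hkeym, ← hkeyl] at hsums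
  have hb' : (∑ j ∈ Finset.Icc 1 n, if j = b then 2 * (r b + 2) else 0) = 2 * (r b + 2) := by
    rw [Finset.sum_ite_eq' (Finset.Icc 1 n) b (fun _ => 2 * (r b + 2)),
      if_pos (by simp; omega)]
  have ha' : (∑ j ∈ Finset.Icc 1 n, if j = a + 1 then 2 * (r (a+1) + 1) else 0)
      = 2 * (r (a+1) + 1) := by
    rw [Finset.sum_ite_eq' (Finset.Icc 1 n) (a+1) (fun _ => 2 * (r (a+1) + 1)),
      if_pos (by simp; omega)]
  rw [hb', ha'] at hsums
  have hmono : r (a+1) ≤ r b := countP_ge_mono rest (by omega)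
  omega
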